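/- In the dual Hesse arrangement of the 9 lines defined by the linear factors of (x^3-y^3)(y^3-z^3)(z^3-x^3) in ℙ²(ℂ), any two distinct lines meet in a point lying on exactly 3 of the 9 lines; in total the lines have exactly 12 intersection points, each of multiplicity 3. -/
import Mathlib


noncomputable section

/-- The complex projective plane (also used as its dual, parametrizing lines). -/
abbrev P2 := Projectivization ℂ (Fin 3 → ℂ)

/-- The point `P` lies on the line `L` (a point of the dual plane). -/
def OnL (P L : P2) : Prop :=
  L.rep 0 * P.rep 0 + L.rep 1 * P.rep 1 + L.rep 2 * P.rep 2 = 0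

/-- `P` is the projective point with homogeneous coordinates `(a : b : c)`. -/
def IsPt (P : P2) (a b c : ℂ) : Prop := ∃ t : ℂ, t ≠ 0 ∧ P.rep = t • ![a, b, c]

/-- The 9 lines of the dual Hesse arrangement:
`x - εᵏy = 0`, `y - εᵏz = 0`, `z - εᵏx = 0` for `k = 0,1,2`. -/
def DualHesse (ε : ℂ) : Set P2 :=
  {L | ∃ k : Fin 3,
    IsPt L 1 (-ε ^ (k : ℕ)) 0 ∨ IsPt L 0 1 (-ε ^ (k : ℕ)) ∨ IsPt L (-ε ^ (k : ℕ)) 0 1}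

namespace DHAux

open Projectivization

/- ### Vector helpers -/

lemma vne0 {a b c : ℂ} (h : a ≠ 0) : ![a, b, c] ≠ 0 := fun hh => h (by simpa using congrFun hh 0)
lemma vne1 {a b c : ℂ} (h : b ≠ 0) : ![a, b, c] ≠ 0 := fun hh => h (by simpa using congrFun hh 1)
lemma vne2 {a b c : ℂ} (h : c ≠ 0) : ![a, b, c] ≠ 0 := fun hh => h (by simpa using congrFun hh 2)

/- ### Projectivization helpers -/

lemma mk_eq_mk_iff' {v w : Fin 3 → ℂ} (hv : v ≠ 0) (hw : w ≠ 0) :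
    Projectivization.mk ℂ v hv = Projectivization.mk ℂ w hw ↔ ∃ t : ℂ, t ≠ 0 ∧ v = t • w := by
  rw [Projectivization.mk_eq_mk_iff]
  constructor
  · rintro ⟨a, ha⟩
    exact ⟨(a : ℂ), a.ne_zero, by rw [← ha, Units.smul_def]⟩
  · rintro ⟨t, ht, rfl⟩
    exact ⟨Units.mk0 t ht, by rw [Units.smul_def]; rfl⟩

lemma rep_mk_spec (v : Fin 3 → ℂ) (hv : v ≠ 0) :
    ∃ t : ℂ, t ≠ 0 ∧ (Projectivization.mk ℂ v hv).rep = t • v := by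
  have h := Projectivization.mk_rep (Projectivization.mk ℂ v hv)
  rw [mk_eq_mk_iff'] at h
  exact h

lemma eq_mk_of_rep {P : P2} {v : Fin 3 → ℂ} (hv : v ≠ 0) {t : ℂ} (ht : t ≠ 0)
    (h : P.rep = t • v) : P = Projectivization.mk ℂ v hv := by
  conv_lhs => rw [← Projectivization.mk_rep P]
  exact (mk_eq_mk_iff' _ _).mpr ⟨t, ht, h⟩

lemma onL_mk (P : P2) (l : Fin 3 → ℂ) (hl : l ≠ 0) :
    OnL P (Projectivization.mk ℂ l hl) ↔
      l 0 * P.rep 0 + l 1 * P.rep 1 + l 2 * P.rep 2 = 0 := by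
  obtain ⟨t, ht, h⟩ := rep_mk_spec l hl
  unfold OnL
  rw [h]
  simp only [Pi.smul_apply, smul_eq_mul]
  rw [show t * l 0 * P.rep 0 + t * l 1 * P.rep 1 + t * l 2 * P.rep 2 =
      t * (l 0 * P.rep 0 + l 1 * P.rep 1 + l 2 * P.rep 2) by ring, mul_eq_zero]
  simp [ht]

lemma onL_mk_mk (p l : Fin 3 → ℂ) (hp : p ≠ 0) (hl : l ≠ 0) :
    OnL (Projectivization.mk ℂ p hp) (Projectivization.mk ℂ l hl) ↔
      l 0 * p 0 + l 1 * p 1 + l 2 * p 2 = 0 := by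
  obtain ⟨t, ht, h⟩ := rep_mk_spec p hp
  rw [onL_mk, h]
  simp only [Pi.smul_apply, smul_eq_mul]
  rw [show l 0 * (t * p 0) + l 1 * (t * p 1) + l 2 * (t * p 2) =
      t * (l 0 * p 0 + l 1 * p 1 + l 2 * p 2) by ring, mul_eq_zero]
  simp [ht]

lemma isPt_iff {P : P2} {a b c : ℂ} (h : ![a, b, c] ≠ 0) :
    IsPt P a b c ↔ P = Projectivization.mk ℂ ![a, b, c] h := by
  constructor
  · rintro ⟨t, ht, hr⟩
    exact eq_mk_of_rep h ht hr
  · rintro rfl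
    exact rep_mk_spec _ h

lemma rep_ne_zero' (P : P2) : ¬(P.rep 0 = 0 ∧ P.rep 1 = 0 ∧ P.rep 2 = 0) := by
  rintro ⟨h0, h1, h2⟩
  apply P.rep_nonzero
  funext n
  fin_cases n
  · exact h0
  · exact h1
  · exact h2

/- ### root-of-unity arithmetic -/

variable {ε : ℂ}

lemma pow_mod3 (hε : IsPrimitiveRoot ε 3) (n : ℕ) : ε ^ (n % 3) = ε ^ n := by
  conv_rhs => rw [← Nat.div_add_mod n 3]
  rw [pow_add, pow_mul, hε.pow_eq_one, one_pow, one_mul]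

lemma epow_inj (hε : IsPrimitiveRoot ε 3) {a b : Fin 3}
    (h : ε ^ (a : ℕ) = ε ^ (b : ℕ)) : a = b :=
  Fin.ext (hε.pow_inj a.isLt b.isLt h)

lemma epow_add (hε : IsPrimitiveRoot ε 3) (a b : Fin 3) :
    ε ^ ((a + b : Fin 3) : ℕ) = ε ^ (a : ℕ) * ε ^ (b : ℕ) := by
  rw [Fin.val_add, pow_mod3 hε, pow_add]

lemma epow_ne_zero (hε : IsPrimitiveRoot ε 3) (a : Fin 3) : ε ^ (a : ℕ) ≠ 0 :=
  pow_ne_zero _ (hε.ne_zero (by norm_num))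

lemma epow_zero : ε ^ ((0 : Fin 3) : ℕ) = 1 := by norm_num

lemma epow_neg_mul (hε : IsPrimitiveRoot ε 3) (a : Fin 3) :
    ε ^ ((-a : Fin 3) : ℕ) * ε ^ (a : ℕ) = 1 := by
  rw [← epow_add hε, neg_add_cancel, epow_zero]

lemma epow_neg_mul' (hε : IsPrimitiveRoot ε 3) (a b : Fin 3) :
    ε ^ ((-(a + b) : Fin 3) : ℕ) * (ε ^ (a : ℕ) * ε ^ (b : ℕ)) = 1 := by
  rw [← epow_add hε]; exact epow_neg_mul hε (a + b)

/- ### The 9 lines and the 12 points -/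

def lineA (ε : ℂ) (k : Fin 3) : P2 :=
  Projectivization.mk ℂ ![1, -ε ^ (k : ℕ), 0] (vne0 one_ne_zero)
def lineB (ε : ℂ) (k : Fin 3) : P2 :=
  Projectivization.mk ℂ ![0, 1, -ε ^ (k : ℕ)] (vne1 one_ne_zero)
def lineC (ε : ℂ) (k : Fin 3) : P2 :=
  Projectivization.mk ℂ ![-ε ^ (k : ℕ), 0, 1] (vne2 one_ne_zero)
def ptE1 : P2 := Projectivization.mk ℂ ![1, 0, 0] (vne0 one_ne_zero)
def ptE2 : P2 := Projectivization.mk ℂ ![0, 1, 0] (vne1 one_ne_zero)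
def ptE3 : P2 := Projectivization.mk ℂ ![0, 0, 1] (vne2 one_ne_zero)
def ptQ (ε : ℂ) (a b : Fin 3) : P2 :=
  Projectivization.mk ℂ ![ε ^ (a : ℕ), ε ^ (b : ℕ), 1] (vne2 one_ne_zero)

lemma mem_dualHesse (ε : ℂ) {L : P2} :
    L ∈ DualHesse ε ↔ ∃ k : Fin 3, L = lineA ε k ∨ L = lineB ε k ∨ L = lineC ε k := by
  unfold DualHesse lineA lineB lineC
  simp only [Set.mem_setOf_eq]
  refine exists_congr fun k => ?_
  rw [isPt_iff (vne0 one_ne_zero), isPt_iff (vne1 one_ne_zero), isPt_iff (vne2 one_ne_zero)]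

/- ### OnL equations -/

lemma onA (P : P2) (ε : ℂ) (k : Fin 3) :
    OnL P (lineA ε k) ↔ P.rep 0 = ε ^ (k : ℕ) * P.rep 1 := by
  rw [lineA, onL_mk]
  simp only [Matrix.cons_val_zero, Matrix.cons_val_one, Matrix.head_cons,
    Matrix.cons_val_two, Matrix.tail_cons]
  constructor <;> intro h <;> linear_combination h

lemma onB (P : P2) (ε : ℂ) (k : Fin 3) :
    OnL P (lineB ε k) ↔ P.rep 1 = ε ^ (k : ℕ) * P.rep 2 := by
  rw [lineB, onL_mk]
  simp only [Matrix.cons_val_zero, Matrix.cons_val_one, Matrix.head_cons,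
    Matrix.cons_val_two, Matrix.tail_cons]
  constructor <;> intro h <;> linear_combination h

lemma onC (P : P2) (ε : ℂ) (k : Fin 3) :
    OnL P (lineC ε k) ↔ P.rep 2 = ε ^ (k : ℕ) * P.rep 0 := by
  rw [lineC, onL_mk]
  simp only [Matrix.cons_val_zero, Matrix.cons_val_one, Matrix.head_cons,
    Matrix.cons_val_two, Matrix.tail_cons]
  constructor <;> intro h <;> linear_combination h

/- ### Incidence of the 12 points with the 9 lines -/

lemma onQ_A (hε : IsPrimitiveRoot ε 3) (a b k : Fin 3) :
    OnL (ptQ ε a b) (lineA ε k) ↔ k = a - b := by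
  rw [ptQ, lineA, onL_mk_mk]
  simp only [Matrix.cons_val_zero, Matrix.cons_val_one, Matrix.head_cons,
    Matrix.cons_val_two, Matrix.tail_cons]
  constructor
  · intro h
    have h2 : ε ^ (a : ℕ) = ε ^ ((k + b : Fin 3) : ℕ) := by
      rw [epow_add hε]; linear_combination h
    have h3 := epow_inj hε h2
    rw [eq_sub_iff_add_eq]
    exact h3.symm
  · rintro rfl
    have h := epow_add hε (a - b) b
    rw [sub_add_cancel] at h
    linear_combination h

lemma onQ_B (hε : IsPrimitiveRoot ε 3) (a b k : Fin 3) :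
    OnL (ptQ ε a b) (lineB ε k) ↔ k = b := by
  rw [ptQ, lineB, onL_mk_mk]
  simp only [Matrix.cons_val_zero, Matrix.cons_val_one, Matrix.head_cons,
    Matrix.cons_val_two, Matrix.tail_cons]
  constructor
  · intro h
    exact (epow_inj hε (by linear_combination h : ε ^ (b : ℕ) = ε ^ (k : ℕ))).symm
  · rintro rfl
    ring

lemma onQ_C (hε : IsPrimitiveRoot ε 3) (a b k : Fin 3) :
    OnL (ptQ ε a b) (lineC ε k) ↔ k = -a := by
  rw [ptQ, lineC, onL_mk_mk]
  simp only [Matrix.cons_val_zero, Matrix.cons_val_one, Matrix.head_cons,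
    Matrix.cons_val_two, Matrix.tail_cons]
  constructor
  · intro h
    have h2 : ε ^ ((k + a : Fin 3) : ℕ) = ε ^ ((0 : Fin 3) : ℕ) := by
      rw [epow_add hε, epow_zero]; linear_combination -h
    have h3 := epow_inj hε h2
    rwa [add_eq_zero_iff_eq_neg] at h3
  · rintro rfl
    linear_combination -epow_neg_mul hε a

lemma onE1_A (hε : IsPrimitiveRoot ε 3) (k : Fin 3) : ¬ OnL ptE1 (lineA ε k) := by
  rw [ptE1, lineA, onL_mk_mk]; simp
lemma onE1_B (hε : IsPrimitiveRoot ε 3) (k : Fin 3) : OnL ptE1 (lineB ε k) := by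
  rw [ptE1, lineB, onL_mk_mk]; simp
lemma onE1_C (hε : IsPrimitiveRoot ε 3) (k : Fin 3) : ¬ OnL ptE1 (lineC ε k) := by
  rw [ptE1, lineC, onL_mk_mk]; simp [epow_ne_zero hε k]
lemma onE2_A (hε : IsPrimitiveRoot ε 3) (k : Fin 3) : ¬ OnL ptE2 (lineA ε k) := by
  rw [ptE2, lineA, onL_mk_mk]; simp [epow_ne_zero hε k]
lemma onE2_B (hε : IsPrimitiveRoot ε 3) (k : Fin 3) : ¬ OnL ptE2 (lineB ε k) := by
  rw [ptE2, lineB, onL_mk_mk]; simp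
lemma onE2_C (hε : IsPrimitiveRoot ε 3) (k : Fin 3) : OnL ptE2 (lineC ε k) := by
  rw [ptE2, lineC, onL_mk_mk]; simp
lemma onE3_A (hε : IsPrimitiveRoot ε 3) (k : Fin 3) : OnL ptE3 (lineA ε k) := by
  rw [ptE3, lineA, onL_mk_mk]; simp
lemma onE3_B (hε : IsPrimitiveRoot ε 3) (k : Fin 3) : ¬ OnL ptE3 (lineB ε k) := by
  rw [ptE3, lineB, onL_mk_mk]; simp [epow_ne_zero hε k]
lemma onE3_C (hε : IsPrimitiveRoot ε 3) (k : Fin 3) : ¬ OnL ptE3 (lineC ε k) := by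
  rw [ptE3, lineC, onL_mk_mk]; simp

/- ### Distinctness of lines and points -/

lemma lineA_ne_lineB (hε : IsPrimitiveRoot ε 3) (i j : Fin 3) : lineA ε i ≠ lineB ε j := by
  rw [lineA, lineB, Ne, mk_eq_mk_iff']
  rintro ⟨t, ht, hv⟩
  have h := congrFun hv 0
  simp at h

lemma lineA_ne_lineC (hε : IsPrimitiveRoot ε 3) (i j : Fin 3) : lineA ε i ≠ lineC ε j := by
  rw [lineA, lineC, Ne, mk_eq_mk_iff']
  rintro ⟨t, ht, hv⟩
  have h := congrFun hv 2
  simp at h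
  exact ht h.symm

lemma lineB_ne_lineC (hε : IsPrimitiveRoot ε 3) (i j : Fin 3) : lineB ε i ≠ lineC ε j := by
  rw [lineB, lineC, Ne, mk_eq_mk_iff']
  rintro ⟨t, ht, hv⟩
  have h := congrFun hv 0
  simp [ht, epow_ne_zero hε j] at h

lemma lineA_inj (hε : IsPrimitiveRoot ε 3) {i j : Fin 3} (h : lineA ε i = lineA ε j) :
    i = j := by
  rw [lineA, lineA, mk_eq_mk_iff'] at h
  obtain ⟨t, ht, hv⟩ := h
  have h0 := congrFun hv 0
  have h1 := congrFun hv 1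
  simp at h0 h1
  apply epow_inj hε
  rw [h1, ← h0, one_mul]

lemma lineB_inj (hε : IsPrimitiveRoot ε 3) {i j : Fin 3} (h : lineB ε i = lineB ε j) :
    i = j := by
  rw [lineB, lineB, mk_eq_mk_iff'] at h
  obtain ⟨t, ht, hv⟩ := h
  have h0 := congrFun hv 1
  have h1 := congrFun hv 2
  simp at h0 h1
  apply epow_inj hε
  rw [h1, ← h0, one_mul]

lemma lineC_inj (hε : IsPrimitiveRoot ε 3) {i j : Fin 3} (h : lineC ε i = lineC ε j) :
    i = j := by
  rw [lineC, lineC, mk_eq_mk_iff'] at h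
  obtain ⟨t, ht, hv⟩ := h
  have h0 := congrFun hv 2
  have h1 := congrFun hv 0
  simp at h0 h1
  apply epow_inj hε
  rw [h1, ← h0, one_mul]

lemma lineA_ne (hε : IsPrimitiveRoot ε 3) {i j : Fin 3} (h : i ≠ j) : lineA ε i ≠ lineA ε j :=
  fun hh => h (lineA_inj hε hh)
lemma lineB_ne (hε : IsPrimitiveRoot ε 3) {i j : Fin 3} (h : i ≠ j) : lineB ε i ≠ lineB ε j :=
  fun hh => h (lineB_inj hε hh)
lemma lineC_ne (hε : IsPrimitiveRoot ε 3) {i j : Fin 3} (h : i ≠ j) : lineC ε i ≠ lineC ε j :=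
  fun hh => h (lineC_inj hε hh)

lemma ptE1_ne_ptE2 : (ptE1 : P2) ≠ ptE2 := by
  rw [ptE1, ptE2, Ne, mk_eq_mk_iff']
  rintro ⟨t, ht, hv⟩
  have h := congrFun hv 0
  simp at h

lemma ptE1_ne_ptE3 : (ptE1 : P2) ≠ ptE3 := by
  rw [ptE1, ptE3, Ne, mk_eq_mk_iff']
  rintro ⟨t, ht, hv⟩
  have h := congrFun hv 0
  simp at h

lemma ptE2_ne_ptE3 : (ptE2 : P2) ≠ ptE3 := by
  rw [ptE2, ptE3, Ne, mk_eq_mk_iff']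
  rintro ⟨t, ht, hv⟩
  have h := congrFun hv 1
  simp at h

lemma ptE1_ne_ptQ (a b : Fin 3) : (ptE1 : P2) ≠ ptQ ε a b := by
  rw [ptE1, ptQ, Ne, mk_eq_mk_iff']
  rintro ⟨t, ht, hv⟩
  have h := congrFun hv 2
  simp at h
  exact ht h.symm

lemma ptE2_ne_ptQ (a b : Fin 3) : (ptE2 : P2) ≠ ptQ ε a b := by
  rw [ptE2, ptQ, Ne, mk_eq_mk_iff']
  rintro ⟨t, ht, hv⟩
  have h := congrFun hv 2
  simp at h
  exact ht h.symm

lemma ptE3_ne_ptQ (hε : IsPrimitiveRoot ε 3) (a b : Fin 3) : (ptE3 : P2) ≠ ptQ ε a b := by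
  rw [ptE3, ptQ, Ne, mk_eq_mk_iff']
  rintro ⟨t, ht, hv⟩
  have h0 := congrFun hv 0
  have h2 := congrFun hv 2
  simp only [Matrix.cons_val_zero, Matrix.cons_val_two, Matrix.tail_cons, Matrix.head_cons,
    Pi.smul_apply, smul_eq_mul, mul_one] at h0 h2
  rw [← h2, one_mul] at h0
  exact epow_ne_zero hε a h0.symm

lemma ptQ_inj (hε : IsPrimitiveRoot ε 3) {a b c d : Fin 3}
    (h : ptQ ε a b = ptQ ε c d) : a = c ∧ b = d := by
  rw [ptQ, ptQ, mk_eq_mk_iff'] at h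
  obtain ⟨t, ht, hv⟩ := h
  have h0 := congrFun hv 0
  have h1 := congrFun hv 1
  have h2 := congrFun hv 2
  simp at h0 h1 h2
  rw [← h2, one_mul] at h0 h1
  exact ⟨epow_inj hε h0, epow_inj hε h1⟩

/- ### Classification of intersection points -/

lemma caseAA (hε : IsPrimitiveRoot ε 3) {P : P2} {i j : Fin 3} (hij : i ≠ j)
    (h1 : P.rep 0 = ε ^ (i : ℕ) * P.rep 1) (h2 : P.rep 0 = ε ^ (j : ℕ) * P.rep 1) :
    P = ptE3 := by
  have hy : P.rep 1 = 0 := by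
    by_contra hy
    exact hij (epow_inj hε (mul_right_cancel₀ hy (h1.symm.trans h2)))
  have hx : P.rep 0 = 0 := by rw [h1, hy, mul_zero]
  have hz : P.rep 2 ≠ 0 := fun hz => rep_ne_zero' P ⟨hx, hy, hz⟩
  apply eq_mk_of_rep (vne2 one_ne_zero) hz
  funext n
  fin_cases n <;>
    simp [Pi.smul_apply, smul_eq_mul, hx, hy]

lemma caseBB (hε : IsPrimitiveRoot ε 3) {P : P2} {i j : Fin 3} (hij : i ≠ j)
    (h1 : P.rep 1 = ε ^ (i : ℕ) * P.rep 2) (h2 : P.rep 1 = ε ^ (j : ℕ) * P.rep 2) :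
    P = ptE1 := by
  have hz : P.rep 2 = 0 := by
    by_contra hz
    exact hij (epow_inj hε (mul_right_cancel₀ hz (h1.symm.trans h2)))
  have hy : P.rep 1 = 0 := by rw [h1, hz, mul_zero]
  have hx : P.rep 0 ≠ 0 := fun hx => rep_ne_zero' P ⟨hx, hy, hz⟩
  apply eq_mk_of_rep (vne0 one_ne_zero) hx
  funext n
  fin_cases n <;>
    simp [Pi.smul_apply, smul_eq_mul, hy, hz]

lemma caseCC (hε : IsPrimitiveRoot ε 3) {P : P2} {i j : Fin 3} (hij : i ≠ j)
    (h1 : P.rep 2 = ε ^ (i : ℕ) * P.rep 0) (h2 : P.rep 2 = ε ^ (j : ℕ) * P.rep 0) :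
    P = ptE2 := by
  have hx : P.rep 0 = 0 := by
    by_contra hx
    exact hij (epow_inj hε (mul_right_cancel₀ hx (h1.symm.trans h2)))
  have hz : P.rep 2 = 0 := by rw [h1, hx, mul_zero]
  have hy : P.rep 1 ≠ 0 := fun hy => rep_ne_zero' P ⟨hx, hy, hz⟩
  apply eq_mk_of_rep (vne1 one_ne_zero) hy
  funext n
  fin_cases n <;>
    simp [Pi.smul_apply, smul_eq_mul, hx, hz]

lemma caseAB (hε : IsPrimitiveRoot ε 3) {P : P2} {i j : Fin 3}
    (h1 : P.rep 0 = ε ^ (i : ℕ) * P.rep 1) (h2 : P.rep 1 = ε ^ (j : ℕ) * P.rep 2) :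
    P = ptQ ε (i + j) j := by
  have hz : P.rep 2 ≠ 0 := by
    intro hz
    exact rep_ne_zero' P ⟨by rw [h1, h2, hz]; ring, by rw [h2, hz, mul_zero], hz⟩
  apply eq_mk_of_rep (vne2 one_ne_zero) hz
  funext n
  fin_cases n
  · show P.rep 0 = P.rep 2 * ε ^ ((i + j : Fin 3) : ℕ)
    rw [h1, h2, epow_add hε]; ring
  · show P.rep 1 = P.rep 2 * ε ^ (j : ℕ)
    rw [h2]; ring
  · show P.rep 2 = P.rep 2 * 1
    ring

lemma caseAC (hε : IsPrimitiveRoot ε 3) {P : P2} {i j : Fin 3}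
    (h1 : P.rep 0 = ε ^ (i : ℕ) * P.rep 1) (h2 : P.rep 2 = ε ^ (j : ℕ) * P.rep 0) :
    P = ptQ ε (-j) (-(i + j)) := by
  have hy : P.rep 1 ≠ 0 := by
    intro hy
    exact rep_ne_zero' P ⟨by rw [h1, hy, mul_zero], hy, by rw [h2, h1, hy]; ring⟩
  have hz : P.rep 2 ≠ 0 := by
    rw [h2, h1]
    exact mul_ne_zero (epow_ne_zero hε j) (mul_ne_zero (epow_ne_zero hε i) hy)
  apply eq_mk_of_rep (vne2 one_ne_zero) hz
  funext n
  fin_cases n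
  · show P.rep 0 = P.rep 2 * ε ^ ((-j : Fin 3) : ℕ)
    rw [h2]
    linear_combination -P.rep 0 * epow_neg_mul hε j
  · show P.rep 1 = P.rep 2 * ε ^ ((-(i + j) : Fin 3) : ℕ)
    rw [h2, h1]
    linear_combination -P.rep 1 * epow_neg_mul' hε i j
  · show P.rep 2 = P.rep 2 * 1
    ring

lemma caseBC (hε : IsPrimitiveRoot ε 3) {P : P2} {i j : Fin 3}
    (h1 : P.rep 1 = ε ^ (i : ℕ) * P.rep 2) (h2 : P.rep 2 = ε ^ (j : ℕ) * P.rep 0) :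
    P = ptQ ε (-j) i := by
  have hx : P.rep 0 ≠ 0 := by
    intro hx
    exact rep_ne_zero' P ⟨hx, by rw [h1, h2, hx]; ring, by rw [h2, hx, mul_zero]⟩
  have hz : P.rep 2 ≠ 0 := by
    rw [h2]
    exact mul_ne_zero (epow_ne_zero hε j) hx
  apply eq_mk_of_rep (vne2 one_ne_zero) hz
  funext n
  fin_cases n
  · show P.rep 0 = P.rep 2 * ε ^ ((-j : Fin 3) : ℕ)
    rw [h2]
    linear_combination -P.rep 0 * epow_neg_mul hε j
  · show P.rep 1 = P.rep 2 * ε ^ (i : ℕ)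
    rw [h1]; ring
  · show P.rep 2 = P.rep 2 * 1
    ring

lemma classify (hε : IsPrimitiveRoot ε 3) {P L₁ L₂ : P2}
    (h₁ : L₁ ∈ DualHesse ε) (h₂ : L₂ ∈ DualHesse ε) (hne : L₁ ≠ L₂)
    (o₁ : OnL P L₁) (o₂ : OnL P L₂) :
    P = ptE1 ∨ P = ptE2 ∨ P = ptE3 ∨ ∃ a b : Fin 3, P = ptQ ε a b := by
  rw [mem_dualHesse] at h₁ h₂
  obtain ⟨i, hi⟩ := h₁
  obtain ⟨j, hj⟩ := h₂
  rcases hi with rfl | rfl | rfl <;> rcases hj with rfl | rfl | rfl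
  · have hij : i ≠ j := fun h => hne (by rw [h])
    rw [onA] at o₁; rw [onA] at o₂
    exact Or.inr (Or.inr (Or.inl (caseAA hε hij o₁ o₂)))
  · rw [onA] at o₁; rw [onB] at o₂
    exact Or.inr (Or.inr (Or.inr ⟨_, _, caseAB hε o₁ o₂⟩))
  · rw [onA] at o₁; rw [onC] at o₂
    exact Or.inr (Or.inr (Or.inr ⟨_, _, caseAC hε o₁ o₂⟩))
  · rw [onB] at o₁; rw [onA] at o₂
    exact Or.inr (Or.inr (Or.inr ⟨_, _, caseAB hε o₂ o₁⟩))
  · have hij : i ≠ j := fun h => hne (by rw [h])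
    rw [onB] at o₁; rw [onB] at o₂
    exact Or.inl (caseBB hε hij o₁ o₂)
  · rw [onB] at o₁; rw [onC] at o₂
    exact Or.inr (Or.inr (Or.inr ⟨_, _, caseBC hε o₁ o₂⟩))
  · rw [onC] at o₁; rw [onA] at o₂
    exact Or.inr (Or.inr (Or.inr ⟨_, _, caseAC hε o₂ o₁⟩))
  · rw [onC] at o₁; rw [onB] at o₂
    exact Or.inr (Or.inr (Or.inr ⟨_, _, caseBC hε o₂ o₁⟩))
  · have hij : i ≠ j := fun h => hne (by rw [h])
    rw [onC] at o₁; rw [onC] at o₂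
    exact Or.inr (Or.inl (caseCC hε hij o₁ o₂))

/- ### Lines through each of the 12 points -/

lemma lines_through_E1 (hε : IsPrimitiveRoot ε 3) :
    {L ∈ DualHesse ε | OnL ptE1 L} = {lineB ε 0, lineB ε 1, lineB ε 2} := by
  ext L
  simp only [Set.mem_setOf_eq, mem_dualHesse, Set.mem_insert_iff, Set.mem_singleton_iff]
  constructor
  · rintro ⟨⟨k, rfl | rfl | rfl⟩, hOn⟩
    · exact absurd hOn (onE1_A hε k)
    · fin_cases k
      · exact Or.inl rfl
      · exact Or.inr (Or.inl rfl)
      · exact Or.inr (Or.inr rfl)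
    · exact absurd hOn (onE1_C hε k)
  · rintro (rfl | rfl | rfl) <;> exact ⟨⟨_, Or.inr (Or.inl rfl)⟩, onE1_B hε _⟩

lemma lines_through_E2 (hε : IsPrimitiveRoot ε 3) :
    {L ∈ DualHesse ε | OnL ptE2 L} = {lineC ε 0, lineC ε 1, lineC ε 2} := by
  ext L
  simp only [Set.mem_setOf_eq, mem_dualHesse, Set.mem_insert_iff, Set.mem_singleton_iff]
  constructor
  · rintro ⟨⟨k, rfl | rfl | rfl⟩, hOn⟩
    · exact absurd hOn (onE2_A hε k)
    · exact absurd hOn (onE2_B hε k)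
    · fin_cases k
      · exact Or.inl rfl
      · exact Or.inr (Or.inl rfl)
      · exact Or.inr (Or.inr rfl)
  · rintro (rfl | rfl | rfl) <;> exact ⟨⟨_, Or.inr (Or.inr rfl)⟩, onE2_C hε _⟩

lemma lines_through_E3 (hε : IsPrimitiveRoot ε 3) :
    {L ∈ DualHesse ε | OnL ptE3 L} = {lineA ε 0, lineA ε 1, lineA ε 2} := by
  ext L
  simp only [Set.mem_setOf_eq, mem_dualHesse, Set.mem_insert_iff, Set.mem_singleton_iff]
  constructor
  · rintro ⟨⟨k, rfl | rfl | rfl⟩, hOn⟩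
    · fin_cases k
      · exact Or.inl rfl
      · exact Or.inr (Or.inl rfl)
      · exact Or.inr (Or.inr rfl)
    · exact absurd hOn (onE3_B hε k)
    · exact absurd hOn (onE3_C hε k)
  · rintro (rfl | rfl | rfl) <;> exact ⟨⟨_, Or.inl rfl⟩, onE3_A hε _⟩

lemma lines_through_Q (hε : IsPrimitiveRoot ε 3) (a b : Fin 3) :
    {L ∈ DualHesse ε | OnL (ptQ ε a b) L} = {lineA ε (a - b), lineB ε b, lineC ε (-a)} := by
  ext L
  simp only [Set.mem_setOf_eq, mem_dualHesse, Set.mem_insert_iff, Set.mem_singleton_iff]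
  constructor
  · rintro ⟨⟨k, rfl | rfl | rfl⟩, hOn⟩
    · rw [onQ_A hε] at hOn
      exact Or.inl (by rw [hOn])
    · rw [onQ_B hε] at hOn
      exact Or.inr (Or.inl (by rw [hOn]))
    · rw [onQ_C hε] at hOn
      exact Or.inr (Or.inr (by rw [hOn]))
  · rintro (rfl | rfl | rfl)
    · exact ⟨⟨a - b, Or.inl rfl⟩, (onQ_A hε a b _).mpr rfl⟩
    · exact ⟨⟨b, Or.inr (Or.inl rfl)⟩, (onQ_B hε a b _).mpr rfl⟩
    · exact ⟨⟨-a, Or.inr (Or.inr rfl)⟩, (onQ_C hε a b _).mpr rfl⟩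

end DHAux

open DHAux

/-- In the dual Hesse arrangement, any intersection point of two distinct lines lies on
exactly 3 of the 9 lines, and there are exactly 12 intersection points in total. -/
theorem dual_hesse_triple_points (ε : ℂ) (hε : IsPrimitiveRoot ε 3) :
    (∀ L₁ ∈ DualHesse ε, ∀ L₂ ∈ DualHesse ε, L₁ ≠ L₂ →
      ∀ P : P2, OnL P L₁ → OnL P L₂ → {L ∈ DualHesse ε | OnL P L}.ncard = 3) ∧
    {P : P2 | ∃ L₁ ∈ DualHesse ε, ∃ L₂ ∈ DualHesse ε,
      L₁ ≠ L₂ ∧ OnL P L₁ ∧ OnL P L₂}.ncard = 12 := by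
  constructor
  · intro L₁ h₁ L₂ h₂ hne P o₁ o₂
    rcases classify hε h₁ h₂ hne o₁ o₂ with rfl | rfl | rfl | ⟨a, b, rfl⟩
    · rw [lines_through_E1 hε]
      exact Set.ncard_eq_three.mpr ⟨_, _, _, lineB_ne hε (by decide),
        lineB_ne hε (by decide), lineB_ne hε (by decide), rfl⟩
    · rw [lines_through_E2 hε]
      exact Set.ncard_eq_three.mpr ⟨_, _, _, lineC_ne hε (by decide),
        lineC_ne hε (by decide), lineC_ne hε (by decide), rfl⟩
    · rw [lines_through_E3 hε]
      exact Set.ncard_eq_three.mpr ⟨_, _, _, lineA_ne hε (by decide),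
        lineA_ne hε (by decide), lineA_ne hε (by decide), rfl⟩
    · rw [lines_through_Q hε]
      exact Set.ncard_eq_three.mpr ⟨_, _, _, lineA_ne_lineB hε _ _,
        lineA_ne_lineC hε _ _, lineB_ne_lineC hε _ _, rfl⟩
  · set f : Fin 3 ⊕ Fin 3 × Fin 3 → P2 :=
      Sum.elim ![ptE1, ptE2, ptE3] (fun p => ptQ ε p.1 p.2) with hf
    have hinj : Function.Injective f := by
      rintro (x | ⟨a, b⟩) (y | ⟨c, d⟩) h
      · simp only [hf, Sum.elim_inl] at h
        fin_cases x <;> fin_cases y <;>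
          first
            | rfl
            | exact absurd h (by
                first
                  | exact ptE1_ne_ptE2
                  | exact ptE1_ne_ptE3
                  | exact ptE2_ne_ptE3
                  | exact ptE1_ne_ptE2.symm
                  | exact ptE1_ne_ptE3.symm
                  | exact ptE2_ne_ptE3.symm)
      · simp only [hf, Sum.elim_inl, Sum.elim_inr] at h
        fin_cases x
        · exact absurd h (ptE1_ne_ptQ c d)
        · exact absurd h (ptE2_ne_ptQ c d)
        · exact absurd h (ptE3_ne_ptQ hε c d)
      · simp only [hf, Sum.elim_inl, Sum.elim_inr] at h
        fin_cases y
        · exact absurd h.symm (ptE1_ne_ptQ a b)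
        · exact absurd h.symm (ptE2_ne_ptQ a b)
        · exact absurd h.symm (ptE3_ne_ptQ hε a b)
      · simp only [hf, Sum.elim_inr] at h
        obtain ⟨h1, h2⟩ := ptQ_inj hε h
        subst h1; subst h2; rfl
    have hrange : {P : P2 | ∃ L₁ ∈ DualHesse ε, ∃ L₂ ∈ DualHesse ε,
        L₁ ≠ L₂ ∧ OnL P L₁ ∧ OnL P L₂} = Set.range f := by
      ext P
      simp only [Set.mem_setOf_eq, Set.mem_range]
      constructor
      · rintro ⟨L₁, h₁, L₂, h₂, hne, o₁, o₂⟩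
        rcases classify hε h₁ h₂ hne o₁ o₂ with rfl | rfl | rfl | ⟨a, b, rfl⟩
        exacts [⟨Sum.inl 0, rfl⟩, ⟨Sum.inl 1, rfl⟩, ⟨Sum.inl 2, rfl⟩, ⟨Sum.inr (a, b), rfl⟩]
      · rintro ⟨x, rfl⟩
        rcases x with x | ⟨a, b⟩
        · fin_cases x
          · exact ⟨lineB ε 0, (mem_dualHesse ε).mpr ⟨0, Or.inr (Or.inl rfl)⟩,
              lineB ε 1, (mem_dualHesse ε).mpr ⟨1, Or.inr (Or.inl rfl)⟩,
              lineB_ne hε (by decide), onE1_B hε 0, onE1_B hε 1⟩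
          · exact ⟨lineC ε 0, (mem_dualHesse ε).mpr ⟨0, Or.inr (Or.inr rfl)⟩,
              lineC ε 1, (mem_dualHesse ε).mpr ⟨1, Or.inr (Or.inr rfl)⟩,
              lineC_ne hε (by decide), onE2_C hε 0, onE2_C hε 1⟩
          · exact ⟨lineA ε 0, (mem_dualHesse ε).mpr ⟨0, Or.inl rfl⟩,
              lineA ε 1, (mem_dualHesse ε).mpr ⟨1, Or.inl rfl⟩,
              lineA_ne hε (by decide), onE3_A hε 0, onE3_A hε 1⟩
        · exact ⟨lineA ε (a - b), (mem_dualHesse ε).mpr ⟨a - b, Or.inl rfl⟩,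
            lineB ε b, (mem_dualHesse ε).mpr ⟨b, Or.inr (Or.inl rfl)⟩,
            lineA_ne_lineB hε _ _, (onQ_A hε a b _).mpr rfl, (onQ_B hε a b _).mpr rfl⟩
    rw [hrange, ← Nat.card_coe_set_eq, Nat.card_range_of_injective hinj]
    simp [Nat.card_eq_fintype_card]
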